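/- arXiv:2101.07776 — 3 statements merged into one kernel-verified Lean document; each statement's English description precedes it below -/
import Mathlib

section
/- Let M₁, M₂ ∈ ℝ^{d×d} each have d distinct nonzero real eigenvalues, let Σ₁, Σ₂ ∈ ℝ^{d²×d²} be symmetric positive semidefinite, and let A₁, A₂ ∈ ℝ^{d×d} be arbitrary. Define P_i ∈ ℝ^{d²×d} with j-th column vec(M_i^j)/‖M_i^j‖_F for j = 1,…,d, and L(N₁, N₂) := −∑_{i=1}^{2} vec(A_i − N_i)ᵀ Σ_i⁺ vec(A_i − N_i). Define Â₁, Â₂ by vec(Â₁) = P₂ (P₂ᵀ Σ₁⁺ P₂)⁺ P₂ᵀ Σ₁⁺ vec(A₁) and vec(Â₂) = P₁ (P₁ᵀ Σ₂⁺ P₁)⁺ P₁ᵀ Σ₂⁺ vec(A₂). Then vec(Â₁) lies in the column space of P₂, vec(Â₂) lies in the column space of P₁, and for every pair (N₁, N₂) of d×d matrices with vec(N₁) in the column space of P₂ and vec(N₂) in the column space of P₁, one has L(N₁, N₂) ≤ L(Â₁, Â₂). -/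
open MeasureTheory ProbabilityTheory Filter Matrix
open scoped Topology Kronecker Classical

noncomputable section

/-- `vec` of a matrix: stacks the columns, so `vecM A (i, j) = A j i`. -/
def vecM {m n : Type*} (A : Matrix m n ℝ) : n × m → ℝ := fun p => A p.2 p.1

/-- The standard Gaussian measure (i.i.d. standard normal coordinates) on `ι → ℝ`. -/
def stdGaussian (ι : Type*) [Fintype ι] : Measure (ι → ℝ) :=
  Measure.pi fun _ => gaussianReal 0 1

/-- Centered multivariate Gaussian `N(0, S)`: the law of `S^{1/2} Z` where `Z` has i.i.d.
standard normal coordinates (junk value if `S` is not positive semidefinite). -/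
def gaussianOf {ι : Type*} [Fintype ι] [DecidableEq ι] (S : Matrix ι ι ℝ) :
    Measure (ι → ℝ) :=
  (stdGaussian ι).map fun z => (if h : S.PosSemidef then h.1.eigenvectorUnitary.1 *
    diagonal (fun i => Real.sqrt (h.1.eigenvalues i)) *
    (star h.1.eigenvectorUnitary.1 : Matrix ι ι ℝ) else 0) *ᵥ z

/-- Chi-squared distribution with `r` degrees of freedom: the law of the sum of squares of
`r` i.i.d. standard normals. -/
def chiSqMeasure (r : ℕ) : Measure ℝ :=
  (stdGaussian (Fin r)).map fun x => ∑ i, (x i) ^ 2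

/-- Convergence in distribution (weak convergence of the laws). -/
def TendstoInDistribution {Ω : Type*} [MeasurableSpace Ω] (μ : Measure Ω)
    {E : Type*} [TopologicalSpace E] [MeasurableSpace E] (X : ℕ → Ω → E)
    (ν : Measure E) : Prop :=
  ∀ f : BoundedContinuousFunction E ℝ,
    Tendsto (fun n => ∫ ω, f (X n ω) ∂μ) atTop (𝓝 (∫ x, f x ∂ν))

/-- Entrywise convergence in probability of random matrices. -/
def TendstoInProbMat {Ω : Type*} [MeasurableSpace Ω] (μ : Measure Ω) {m n : Type*}
    (X : ℕ → Ω → Matrix m n ℝ) (L : Matrix m n ℝ) : Prop :=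
  ∀ i j, TendstoInMeasure μ (fun k ω => X k ω i j) atTop (fun _ => L i j)

/-- Eigenvalues of a symmetric real matrix (junk value `0` otherwise). -/
def symEigs {ι : Type*} [Fintype ι] [DecidableEq ι] (A : Matrix ι ι ℝ) : ι → ℝ :=
  if h : A.IsHermitian then h.eigenvalues else 0

/-- `ε`-truncation `A(ε) = U diag(λ_i 1{λ_i > ε}) Uᵀ` of a symmetric matrix. -/
def truncMat {ι : Type*} [Fintype ι] [DecidableEq ι] (A : Matrix ι ι ℝ) (ε : ℝ) :
    Matrix ι ι ℝ :=
  if h : A.IsHermitian then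
    h.eigenvectorUnitary.1 *
      diagonal (fun i => if ε < h.eigenvalues i then h.eigenvalues i else 0) *
      (star h.eigenvectorUnitary.1 : Matrix ι ι ℝ)
  else 0

/-- Truncated Moore–Penrose pseudoinverse `A⁺(ε) = U diag(λ_i⁻¹ 1{λ_i > ε}) Uᵀ`
of a symmetric matrix. -/
def truncPinv {ι : Type*} [Fintype ι] [DecidableEq ι] (A : Matrix ι ι ℝ) (ε : ℝ) :
    Matrix ι ι ℝ :=
  if h : A.IsHermitian then
    h.eigenvectorUnitary.1 *
      diagonal (fun i => if ε < h.eigenvalues i then (h.eigenvalues i)⁻¹ else 0) *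
      (star h.eigenvectorUnitary.1 : Matrix ι ι ℝ)
  else 0

/-- Moore–Penrose pseudoinverse of a symmetric positive semidefinite matrix. -/
def pinv {ι : Type*} [Fintype ι] [DecidableEq ι] (A : Matrix ι ι ℝ) : Matrix ι ι ℝ :=
  truncPinv A 0

/-- Truncated rank `rank(A; ε)`: the number of eigenvalues (with multiplicity)
exceeding `ε`. -/
def truncRank {ι : Type*} [Fintype ι] [DecidableEq ι] (A : Matrix ι ι ℝ) (ε : ℝ) : ℕ :=
  Fintype.card {i // ε < symEigs A i}

/-- `ε` is an eigenvalue of `A`. -/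
def IsEigenvalue {ι : Type*} [Fintype ι] [DecidableEq ι] (A : Matrix ι ι ℝ) (ε : ℝ) :
    Prop :=
  ∃ v : ι → ℝ, v ≠ 0 ∧ A *ᵥ v = ε • v

/-- `M` has `d` pairwise distinct nonzero real eigenvalues: its characteristic polynomial
has `d` pairwise distinct real roots, all nonzero. -/
def HasDistinctNonzeroRealEigenvalues {d : ℕ} (M : Matrix (Fin d) (Fin d) ℝ) : Prop :=
  ∃ lam : Fin d → ℝ, Function.Injective lam ∧ (∀ i, lam i ≠ 0) ∧
    M.charpoly = ∏ i, (Polynomial.X - Polynomial.C (lam i))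

/-- Frobenius norm of a matrix. -/
def frobNorm {m n : Type*} [Fintype m] [Fintype n] (A : Matrix m n ℝ) : ℝ :=
  Real.sqrt (∑ i, ∑ j, (A i j) ^ 2)

/-- `Λ(X) = I_d ⊗ X − Xᵀ ⊗ I_d`. -/
def lamOp {d : ℕ} (X : Matrix (Fin d) (Fin d) ℝ) :
    Matrix (Fin d × Fin d) (Fin d × Fin d) ℝ :=
  (1 : Matrix (Fin d) (Fin d) ℝ) ⊗ₖ X - Xᵀ ⊗ₖ (1 : Matrix (Fin d) (Fin d) ℝ)


section Helpers

variable {ι : Type*} [Fintype ι] [DecidableEq ι]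

lemma pinv_eq (A : Matrix ι ι ℝ) (h : A.IsHermitian) :
    pinv A = h.eigenvectorUnitary.1 *
      diagonal (fun i => if 0 < h.eigenvalues i then (h.eigenvalues i)⁻¹ else 0) *
      (star h.eigenvectorUnitary.1 : Matrix ι ι ℝ) := by
  rw [pinv, truncPinv, dif_pos h]

lemma pinv_posSemidef {A : Matrix ι ι ℝ} (hA : A.PosSemidef) : (pinv A).PosSemidef := by
  rw [pinv_eq A hA.1]
  have hd : (diagonal (fun i => if 0 < hA.1.eigenvalues i then (hA.1.eigenvalues i)⁻¹ else 0)).PosSemidef := by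
    rw [posSemidef_diagonal_iff]
    intro i
    split <;> positivity
  exact hd.mul_mul_conjTranspose_same (hA.1.eigenvectorUnitary.1)

lemma pinv_isHermitian {A : Matrix ι ι ℝ} (hA : A.IsHermitian) : (pinv A).IsHermitian := by
  rw [pinv_eq A hA]
  exact isHermitian_mul_mul_conjTranspose _ (isHermitian_diagonal _)

lemma sandwich (U : Matrix ι ι ℝ) (hU : star U * U = 1) (D₁ D₂ : Matrix ι ι ℝ) :
    (U * D₁ * star U) * (U * D₂ * star U) = U * (D₁ * D₂) * star U := by
  have h : ∀ X : Matrix ι ι ℝ, star U * (U * X) = X := fun X => by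
    rw [← Matrix.mul_assoc, hU, Matrix.one_mul]
  simp only [Matrix.mul_assoc, h]

lemma sand3 (U D F A : Matrix ι ι ℝ) (hU : star U * U = 1)
    (hA : A = U * D * star U) (hp : pinv A = U * F * star U)
    (hDF : D * F * D = D) : A * pinv A * A = A := by
  rw [hp, hA, sandwich _ hU, sandwich _ hU, Matrix.mul_assoc D, ← Matrix.mul_assoc D, hDF]

lemma mul_pinv_mul {A : Matrix ι ι ℝ} (hA : A.PosSemidef) : A * pinv A * A = A := by
  have h := hA.1
  have hU : (star h.eigenvectorUnitary.1 : Matrix ι ι ℝ) * h.eigenvectorUnitary.1 = 1 :=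
    Matrix.mem_unitaryGroup_iff'.mp h.eigenvectorUnitary.2
  refine sand3 _ (diagonal (RCLike.ofReal ∘ h.eigenvalues))
    (diagonal (fun i => if 0 < h.eigenvalues i then (h.eigenvalues i)⁻¹ else 0)) _ hU
    h.spectral_theorem (pinv_eq A h) ?_
  rw [diagonal_mul_diagonal, diagonal_mul_diagonal]
  refine congrArg diagonal (funext fun i => ?_)
  have hnn := hA.eigenvalues_nonneg i
  simp only [Function.comp_apply, RCLike.ofReal_real_eq_id, id_eq]
  by_cases hpos : 0 < h.eigenvalues i
  · rw [if_pos hpos, mul_inv_cancel₀ (ne_of_gt hpos), one_mul]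
  · have h0 : h.eigenvalues i = 0 := le_antisymm (not_lt.mp hpos) hnn
    rw [h0]; ring

lemma pinv_transpose {A : Matrix ι ι ℝ} (hA : A.IsHermitian) : (pinv A)ᵀ = pinv A := by
  rw [← conjTranspose_eq_transpose_of_trivial]
  exact pinv_isHermitian hA

lemma expand_aux {κ : Type*} [Fintype κ] [DecidableEq κ]
    (X : Matrix ι κ ℝ) (Y : Matrix κ κ ℝ) :
    (X * Y - X)ᵀ * (X * Y - X) =
      Yᵀ * (Xᵀ * X) * Y - Yᵀ * (Xᵀ * X) - (Xᵀ * X) * Y + Xᵀ * X := by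
  simp only [transpose_sub, transpose_mul, Matrix.sub_mul, Matrix.mul_sub, Matrix.mul_assoc]
  abel

lemma proj_fix {κ : Type*} [Fintype κ] [DecidableEq κ]
    (W : Matrix ι ι ℝ) (hW : W.PosSemidef) (P : Matrix ι κ ℝ) :
    (Pᵀ * W * P) * pinv (Pᵀ * W * P) * (Pᵀ * W) = Pᵀ * W := by
  have hU : (star hW.1.eigenvectorUnitary.1 : Matrix ι ι ℝ) * hW.1.eigenvectorUnitary.1 = 1 :=
    Matrix.mem_unitaryGroup_iff'.mp hW.1.eigenvectorUnitary.2
  set Rm : Matrix ι ι ℝ := hW.1.eigenvectorUnitary.1 *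
    diagonal (fun i => Real.sqrt (hW.1.eigenvalues i)) *
    (star hW.1.eigenvectorUnitary.1 : Matrix ι ι ℝ) with hRm
  have he : ∀ i, Real.sqrt (hW.1.eigenvalues i) * Real.sqrt (hW.1.eigenvalues i) =
      hW.1.eigenvalues i := fun i => Real.mul_self_sqrt (hW.eigenvalues_nonneg i)
  have hRR : Rm * Rm = W := by
    rw [hRm, sandwich _ hU, diagonal_mul_diagonal]
    conv_rhs => rw [hW.1.spectral_theorem]
    simp only [he, Function.comp_def, RCLike.ofReal_real_eq_id, id_eq,
      Unitary.conjStarAlgAut_apply]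
  have hRt : Rmᵀ = Rm := by
    rw [← conjTranspose_eq_transpose_of_trivial]
    exact isHermitian_mul_mul_conjTranspose _ (isHermitian_diagonal _)
  set R := Rm with hRdef
  set B := R * P with hBdef
  have hG : Bᵀ * B = Pᵀ * W * P := by
    rw [hBdef, transpose_mul, hRt, ← hRR]
    simp only [Matrix.mul_assoc]
  have hGsd : (Pᵀ * W * P).PosSemidef := by
    have := posSemidef_conjTranspose_mul_self B
    rwa [conjTranspose_eq_transpose_of_trivial, hG] at this
  set G := Pᵀ * W * P with hGdef
  have hGt : Gᵀ = G := by
    rw [← conjTranspose_eq_transpose_of_trivial]; exact hGsd.1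
  have hpt : (pinv G)ᵀ = pinv G := pinv_transpose hGsd.1
  have hGpG : G * pinv G * G = G := mul_pinv_mul hGsd
  have h1 : (pinv G * G)ᵀ = G * pinv G := by rw [transpose_mul, hpt, hGt]
  have h2 : G * (pinv G * G) = G := by rw [← Matrix.mul_assoc, hGpG]
  have hXz : B * (pinv G * G) = B := by
    rw [← sub_eq_zero, ← conjTranspose_mul_self_eq_zero (A := B * (pinv G * G) - B),
      conjTranspose_eq_transpose_of_trivial, expand_aux, hG, h1, hGpG, h2]
    abel
  have hXt : G * pinv G * Bᵀ = Bᵀ := by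
    have h4 := congrArg Matrix.transpose hXz
    rwa [transpose_mul, transpose_mul, hpt, hGt] at h4
  have hBt : Bᵀ = Pᵀ * R := by rw [hBdef, transpose_mul, hRt]
  calc G * pinv G * (Pᵀ * W) = G * pinv G * (Pᵀ * R) * R := by
        rw [← hRR]; simp only [Matrix.mul_assoc]
    _ = Bᵀ * R := by rw [← hBt, hXt]
    _ = Pᵀ * W := by rw [hBt, Matrix.mul_assoc, hRR]

lemma key_le {κ : Type*} [Fintype κ] [DecidableEq κ]
    (W : Matrix ι ι ℝ) (hW : W.PosSemidef) (P : Matrix ι κ ℝ) (a : ι → ℝ) (y : κ → ℝ) :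
    (a - (P * pinv (Pᵀ * W * P) * Pᵀ * W) *ᵥ a) ⬝ᵥ W *ᵥ
        (a - (P * pinv (Pᵀ * W * P) * Pᵀ * W) *ᵥ a)
      ≤ (a - P *ᵥ y) ⬝ᵥ W *ᵥ (a - P *ᵥ y) := by
  have hWt : Wᵀ = W := by
    rw [← conjTranspose_eq_transpose_of_trivial]; exact hW.1
  set G := Pᵀ * W * P with hGdef
  set c := (P * pinv G * Pᵀ * W) *ᵥ a with hcdef
  set u := a - c with hudef
  set z := (pinv G * Pᵀ * W) *ᵥ a - y with hzdef
  have hc : c = P *ᵥ ((pinv G * Pᵀ * W) *ᵥ a) := by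
    rw [hcdef, mulVec_mulVec]
    simp only [Matrix.mul_assoc]
  have hv : a - P *ᵥ y = u + P *ᵥ z := by
    rw [hudef, hzdef, Matrix.mulVec_sub, hc]
    abel
  have hm : (Pᵀ * W) * (P * pinv G * Pᵀ * W) = Pᵀ * W := by
    have h := proj_fix W hW P
    calc (Pᵀ * W) * (P * pinv G * Pᵀ * W)
        = (Pᵀ * W * P) * pinv G * (Pᵀ * W) := by simp only [Matrix.mul_assoc]
      _ = Pᵀ * W := h
  have hu0 : (Pᵀ * W) *ᵥ u = 0 := by
    rw [hudef, Matrix.mulVec_sub, hcdef, mulVec_mulVec, hm, sub_self]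
  have cross : u ⬝ᵥ W *ᵥ (P *ᵥ z) = 0 := by
    rw [mulVec_mulVec, dotProduct_mulVec, ← Matrix.mulVec_transpose, transpose_mul, hWt,
      hu0, zero_dotProduct]
  have cross2 : (P *ᵥ z) ⬝ᵥ W *ᵥ u = 0 := by
    rw [dotProduct_mulVec, ← Matrix.mulVec_transpose, hWt, dotProduct_comm]
    exact cross
  have pos : 0 ≤ (P *ᵥ z) ⬝ᵥ W *ᵥ (P *ᵥ z) := by
    have := hW.dotProduct_mulVec_nonneg (P *ᵥ z)
    simpa using this
  rw [hv]
  have expand : (u + P *ᵥ z) ⬝ᵥ W *ᵥ (u + P *ᵥ z) =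
      u ⬝ᵥ W *ᵥ u + u ⬝ᵥ W *ᵥ (P *ᵥ z) + (P *ᵥ z) ⬝ᵥ W *ᵥ u +
        (P *ᵥ z) ⬝ᵥ W *ᵥ (P *ᵥ z) := by
    rw [Matrix.mulVec_add, add_dotProduct, dotProduct_add, dotProduct_add]
    ring
  rw [expand, cross, cross2]
  linarith

lemma vecM_sub {m n : Type*} (X Y : Matrix m n ℝ) : vecM (X - Y) = vecM X - vecM Y := by
  funext p
  simp [vecM, Matrix.sub_apply]

end Helpers

/-- Proposition 3.3: the explicit M-estimators `Â₁, Â₂` maximize the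
log-likelihood type function `L` over the constraint sets given by the column spaces of
`P₂` and `P₁`. -/
theorem llr_m_estimators {d : ℕ} (hd : 1 ≤ d)
    (M₁ M₂ : Matrix (Fin d) (Fin d) ℝ)
    (hM₁ : HasDistinctNonzeroRealEigenvalues M₁)
    (hM₂ : HasDistinctNonzeroRealEigenvalues M₂)
    (S₁ S₂ : Matrix (Fin d × Fin d) (Fin d × Fin d) ℝ)
    (hS₁ : S₁.PosSemidef) (hS₂ : S₂.PosSemidef)
    (A₁ A₂ : Matrix (Fin d) (Fin d) ℝ)
    (P₁ P₂ : Matrix (Fin d × Fin d) (Fin d) ℝ)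
    (hP₁ : ∀ q j, P₁ q j = vecM (M₁ ^ ((j : ℕ) + 1)) q / frobNorm (M₁ ^ ((j : ℕ) + 1)))
    (hP₂ : ∀ q j, P₂ q j = vecM (M₂ ^ ((j : ℕ) + 1)) q / frobNorm (M₂ ^ ((j : ℕ) + 1)))
    (L : Matrix (Fin d) (Fin d) ℝ → Matrix (Fin d) (Fin d) ℝ → ℝ)
    (hL : ∀ N₁ N₂, L N₁ N₂ =
      -((vecM (A₁ - N₁) ⬝ᵥ pinv S₁ *ᵥ vecM (A₁ - N₁)) +
        (vecM (A₂ - N₂) ⬝ᵥ pinv S₂ *ᵥ vecM (A₂ - N₂))))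
    (Ahat₁ Ahat₂ : Matrix (Fin d) (Fin d) ℝ)
    (hAhat₁ : vecM Ahat₁ =
      (P₂ * pinv (P₂ᵀ * pinv S₁ * P₂) * P₂ᵀ * pinv S₁) *ᵥ vecM A₁)
    (hAhat₂ : vecM Ahat₂ =
      (P₁ * pinv (P₁ᵀ * pinv S₂ * P₁) * P₁ᵀ * pinv S₂) *ᵥ vecM A₂) :
    (∃ x₁ : Fin d → ℝ, vecM Ahat₁ = P₂ *ᵥ x₁) ∧
    (∃ x₂ : Fin d → ℝ, vecM Ahat₂ = P₁ *ᵥ x₂) ∧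
    ∀ N₁ N₂ : Matrix (Fin d) (Fin d) ℝ,
      (∃ y₁ : Fin d → ℝ, vecM N₁ = P₂ *ᵥ y₁) →
      (∃ y₂ : Fin d → ℝ, vecM N₂ = P₁ *ᵥ y₂) →
      L N₁ N₂ ≤ L Ahat₁ Ahat₂ := by
  have hW₁ : (pinv S₁).PosSemidef := pinv_posSemidef hS₁
  have hW₂ : (pinv S₂).PosSemidef := pinv_posSemidef hS₂
  refine ⟨⟨(pinv (P₂ᵀ * pinv S₁ * P₂) * P₂ᵀ * pinv S₁) *ᵥ vecM A₁, ?_⟩,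
          ⟨(pinv (P₁ᵀ * pinv S₂ * P₁) * P₁ᵀ * pinv S₂) *ᵥ vecM A₂, ?_⟩, ?_⟩
  · rw [hAhat₁, mulVec_mulVec]
    simp only [Matrix.mul_assoc]
  · rw [hAhat₂, mulVec_mulVec]
    simp only [Matrix.mul_assoc]
  · rintro N₁ N₂ ⟨y₁, hy₁⟩ ⟨y₂, hy₂⟩
    rw [hL, hL]
    have h1 := key_le (pinv S₁) hW₁ P₂ (vecM A₁) y₁
    have h2 := key_le (pinv S₂) hW₂ P₁ (vecM A₂) y₂
    rw [vecM_sub, vecM_sub, vecM_sub, vecM_sub, hAhat₁, hAhat₂, hy₁, hy₂]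
    linarith


end
end

section
/- Let M₁, M₂ ∈ ℝ^{d×d} each have d distinct nonzero real eigenvalues, and suppose Assumption (A1) holds with p = 2 (c(n)·vec(A_{i,n} − M_i) ⇒ N(0, Σ_i) with c(n) → ∞, A_{1,n} and A_{2,n} independent). Let ε > 0 be a constant that is not an eigenvalue of Σ₁ nor of Σ₂, and let P_i ∈ ℝ^{d²×d} have j-th column vec(M_i^j)/‖M_i^j‖_F. Define the residual vectors m₁ := vec(M₁) − P₂ (P₂ᵀ Σ₁⁺(ε) P₂)⁺ P₂ᵀ Σ₁⁺(ε) vec(M₁) and m₂ := vec(M₂) − P₁ (P₁ᵀ Σ₂⁺(ε) P₁)⁺ P₁ᵀ Σ₂⁺(ε) vec(M₂), and assume Σ₁⁺(ε) m₁ ≠ 0 and Σ₂⁺(ε) m₂ ≠ 0. Then the statistic Γ₂^#(ε) := c(n)² [ vec(A_{1,n})ᵀ Q_{1,2}[ε] vec(A_{1,n}) + vec(A_{2,n})ᵀ Q_{2,1}[ε] vec(A_{2,n}) ], with Q_{k,ℓ}[ε] := Σ_k⁺(ε) − Σ_k⁺(ε) P_ℓ (P_ℓᵀ Σ_k⁺(ε)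 P_ℓ)⁺ P_ℓᵀ Σ_k⁺(ε), tends to +∞ in probability as n → ∞; consequently, for any real random variable ξ with a chi-squared distribution, P(ξ > Γ₂^#(ε)) → 0. -/
open MeasureTheory ProbabilityTheory Filter Matrix
open scoped Topology Kronecker Classical

noncomputable section

section AuxAlgebra

variable {ι : Type*} [Fintype ι] [DecidableEq ι]

lemma truncPinv_isHermitian (A : Matrix ι ι ℝ) (ε : ℝ) : (truncPinv A ε).IsHermitian := by
  unfold truncPinv
  split_ifs with h
  · simpa [Matrix.star_eq_conjTranspose] using
      Matrix.isHermitian_mul_mul_conjTranspose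
        (h.eigenvectorUnitary.1 : Matrix ι ι ℝ) (Matrix.isHermitian_diagonal _)
  · exact Matrix.isHermitian_zero

lemma truncPinv_transpose (A : Matrix ι ι ℝ) (ε : ℝ) : (truncPinv A ε)ᵀ = truncPinv A ε := by
  have h := (truncPinv_isHermitian A ε).eq
  rwa [Matrix.conjTranspose_eq_transpose_of_trivial] at h

lemma truncPinv_posSemidef (A : Matrix ι ι ℝ) {ε : ℝ} (hε : 0 ≤ ε) :
    (truncPinv A ε).PosSemidef := by
  unfold truncPinv
  split_ifs with h
  · rw [Matrix.star_eq_conjTranspose]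
    refine Matrix.PosSemidef.mul_mul_conjTranspose_same
      (Matrix.posSemidef_diagonal_iff.mpr fun i => ?_) _
    split_ifs with hi
    · exact le_of_lt (inv_pos.mpr (lt_of_le_of_lt hε hi))
    · exact le_rfl
  · exact Matrix.PosSemidef.zero

lemma conj_mul_conj {U D₁ D : Matrix ι ι ℝ} (hUU : star U * U = 1) :
    (U * D₁ * star U) * (U * D * star U) * (U * D₁ * star U) = U * (D₁ * D * D₁) * star U := by
  calc (U * D₁ * star U) * (U * D * star U) * (U * D₁ * star U)
      = U * D₁ * ((star U * U) * (D * ((star U * U) * (D₁ * star U)))) := by noncomm_ring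
    _ = U * (D₁ * D * D₁) * star U := by rw [hUU]; noncomm_ring

lemma pinv_mul_mul (G : Matrix ι ι ℝ) (hG : G.IsHermitian) :
    pinv G * G * pinv G = pinv G := by
  unfold pinv truncPinv
  rw [dif_pos hG]
  have hUU : star (hG.eigenvectorUnitary : Matrix ι ι ℝ) * (hG.eigenvectorUnitary : Matrix ι ι ℝ)
      = 1 := Matrix.mem_unitaryGroup_iff'.mp hG.eigenvectorUnitary.2
  have hspec : G = (hG.eigenvectorUnitary : Matrix ι ι ℝ) *
      Matrix.diagonal (RCLike.ofReal ∘ hG.eigenvalues) *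
      star (hG.eigenvectorUnitary : Matrix ι ι ℝ) := hG.spectral_theorem
  rw [show (RCLike.ofReal ∘ hG.eigenvalues : ι → ℝ) = hG.eigenvalues by
    funext i; simp [RCLike.ofReal_real_eq_id]] at hspec
  generalize hU : (hG.eigenvectorUnitary : Matrix ι ι ℝ) = U at hUU hspec ⊢
  generalize hl : hG.eigenvalues = lam at hspec ⊢
  rw [hspec, conj_mul_conj hUU]
  have hfun : (fun i => (if (0:ℝ) < lam i then (lam i)⁻¹ else 0) * lam i *
      (if (0:ℝ) < lam i then (lam i)⁻¹ else 0)) =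
      (fun i => if (0:ℝ) < lam i then (lam i)⁻¹ else 0) := by
    funext i
    by_cases hi : (0:ℝ) < lam i
    · have hne : lam i ≠ 0 := ne_of_gt hi
      simp [hi, inv_mul_cancel₀ hne]
    · simp [hi]
  rw [Matrix.diagonal_mul_diagonal, Matrix.diagonal_mul_diagonal, hfun]

lemma posSemidef_dotProduct_pos {T : Matrix ι ι ℝ} (hT : T.PosSemidef) {x : ι → ℝ}
    (hx : T *ᵥ x ≠ 0) : 0 < x ⬝ᵥ T *ᵥ x := by
  have h0 : 0 ≤ x ⬝ᵥ T *ᵥ x := by simpa using hT.dotProduct_mulVec_nonneg x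
  rcases h0.lt_or_eq with h | h
  · exact h
  · exfalso
    apply hx
    have := (hT.dotProduct_mulVec_zero_iff x).mp (by simpa using h.symm)
    exact this

lemma mulVec_dotProduct_eq (M : Matrix ι ι ℝ) (x y : ι → ℝ) :
    (M *ᵥ x) ⬝ᵥ y = x ⬝ᵥ (Mᵀ *ᵥ y) := by
  rw [Matrix.dotProduct_mulVec, Matrix.vecMul_transpose]

lemma quadform_residual {k : Type*} [Fintype k] [DecidableEq k]
    (T : Matrix ι ι ℝ) (hTt : Tᵀ = T) (P : Matrix ι k ℝ) (v : ι → ℝ) :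
    (v - (P * pinv (Pᵀ * T * P) * Pᵀ * T) *ᵥ v) ⬝ᵥ
        (T *ᵥ (v - (P * pinv (Pᵀ * T * P) * Pᵀ * T) *ᵥ v)) =
      v ⬝ᵥ ((T - T * (P * pinv (Pᵀ * T * P) * Pᵀ * T)) *ᵥ v) := by
  have hTh : T.IsHermitian := by
    rw [Matrix.IsHermitian, Matrix.conjTranspose_eq_transpose_of_trivial]; exact hTt
  set G : Matrix k k ℝ := Pᵀ * T * P with hGdef
  have hGh : G.IsHermitian := by
    have h := Matrix.isHermitian_conjTranspose_mul_mul P hTh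
    rwa [Matrix.conjTranspose_eq_transpose_of_trivial] at h
  have hpinvh : (pinv G)ᵀ = pinv G := truncPinv_transpose G 0
  set B : Matrix ι ι ℝ := P * pinv G * Pᵀ * T with hBdef
  have hBt : Bᵀ = T * (P * pinv G * Pᵀ) := by
    rw [hBdef, Matrix.transpose_mul, Matrix.transpose_mul, Matrix.transpose_mul,
      Matrix.transpose_transpose, hTt, hpinvh]
    simp only [Matrix.mul_assoc]
  have h1 : Bᵀ * T = T * B := by rw [hBt, hBdef]; simp only [Matrix.mul_assoc]
  have h2 : Bᵀ * T * B = T * B := by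
    have hcyc : pinv G * G * pinv G = pinv G := pinv_mul_mul G hGh
    calc Bᵀ * T * B = T * (P * (pinv G * (Pᵀ * T * P) * pinv G) * Pᵀ * T) := by
          rw [hBt, hBdef]; simp only [Matrix.mul_assoc]
      _ = T * (P * pinv G * Pᵀ * T) := by rw [← hGdef, hcyc]
      _ = T * B := by rw [hBdef]
  rw [Matrix.sub_mulVec, Matrix.mulVec_sub, dotProduct_sub, sub_dotProduct,
    sub_dotProduct, dotProduct_sub]
  have e1 : (B *ᵥ v) ⬝ᵥ T *ᵥ v = v ⬝ᵥ (T * B) *ᵥ v := by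
    rw [mulVec_dotProduct_eq, Matrix.mulVec_mulVec, h1]
  have e2 : (B *ᵥ v) ⬝ᵥ T *ᵥ B *ᵥ v = v ⬝ᵥ (T * B) *ᵥ v := by
    rw [mulVec_dotProduct_eq]
    simp only [Matrix.mulVec_mulVec, ← Matrix.mul_assoc]
    rw [h2]
  have e3 : v ⬝ᵥ T *ᵥ B *ᵥ v = v ⬝ᵥ (T * B) *ᵥ v := by rw [Matrix.mulVec_mulVec]
  rw [e1, e2, e3]
  ring

lemma continuous_quadform (Q : Matrix ι ι ℝ) : Continuous fun x : ι → ℝ => x ⬝ᵥ Q *ᵥ x := by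
  simp only [dotProduct, Matrix.mulVec]
  exact continuous_finset_sum _ fun i _ =>
    (continuous_apply i).mul
      (continuous_finset_sum _ fun j _ => continuous_const.mul (continuous_apply j))

end AuxAlgebra

section AuxProb

variable {ι : Type*} [Fintype ι] [DecidableEq ι]

lemma measurable_mulVecFun (M : Matrix ι ι ℝ) : Measurable fun z : ι → ℝ => M *ᵥ z := by
  refine measurable_pi_iff.mpr fun i => ?_
  simpa [Matrix.mulVec, dotProduct] using
    Finset.measurable_sum Finset.univ fun j _ => (by fun_prop)

lemma isProbabilityMeasure_stdGaussian : IsProbabilityMeasure (stdGaussian ι) := by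
  unfold _root_.stdGaussian; infer_instance

lemma isProbabilityMeasure_gaussianOf (S : Matrix ι ι ℝ) :
    IsProbabilityMeasure (gaussianOf S) := by
  have := isProbabilityMeasure_stdGaussian (ι := ι)
  unfold gaussianOf
  exact Measure.isProbabilityMeasure_map (measurable_mulVecFun _).aemeasurable

lemma isProbabilityMeasure_chiSq (r : ℕ) : IsProbabilityMeasure (chiSqMeasure r) := by
  have := isProbabilityMeasure_stdGaussian (ι := Fin r)
  unfold chiSqMeasure
  exact Measure.isProbabilityMeasure_map
    (Finset.measurable_sum Finset.univ fun j _ =>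
      (measurable_pi_apply j).pow_const 2).aemeasurable

/-- A continuous `[0,1]`-valued cutoff: `0` for `‖x‖ ≤ K`, `1` for `K + 1 ≤ ‖x‖`. -/
def cutoffBCF (E : Type*) [SeminormedAddCommGroup E] (K : ℝ) :
    BoundedContinuousFunction E ℝ :=
  BoundedContinuousFunction.mkOfBound
    ⟨fun x => min 1 (max 0 (‖x‖ - K)),
      continuous_const.min (continuous_const.max (continuous_norm.sub continuous_const))⟩
    1 (by
      intro x y
      rw [Real.dist_eq, abs_sub_le_iff]
      constructor
      · have h1 : min 1 (max 0 (‖x‖ - K)) ≤ 1 := min_le_left _ _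
        have h2 : (0:ℝ) ≤ min 1 (max 0 (‖y‖ - K)) := le_min zero_le_one (le_max_left _ _)
        simpa using sub_le_sub h1 h2
      · have h1 : min 1 (max 0 (‖y‖ - K)) ≤ 1 := min_le_left _ _
        have h2 : (0:ℝ) ≤ min 1 (max 0 (‖x‖ - K)) := le_min zero_le_one (le_max_left _ _)
        simpa using sub_le_sub h1 h2)

lemma cutoffBCF_nonneg {E : Type*} [SeminormedAddCommGroup E] (K : ℝ) (x : E) :
    0 ≤ cutoffBCF E K x :=
  le_min zero_le_one (le_max_left _ _)

lemma cutoffBCF_le_one {E : Type*} [SeminormedAddCommGroup E] (K : ℝ) (x : E) :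
    cutoffBCF E K x ≤ 1 :=
  min_le_left _ _

lemma cutoffBCF_eq_one {E : Type*} [SeminormedAddCommGroup E] {K : ℝ} {x : E}
    (h : K + 1 ≤ ‖x‖) : cutoffBCF E K x = 1 := by
  have h1 : (1:ℝ) ≤ ‖x‖ - K := by linarith
  exact min_eq_left (h1.trans (le_max_right _ _))

lemma cutoffBCF_eq_zero {E : Type*} [SeminormedAddCommGroup E] {K : ℝ} {x : E}
    (h : ‖x‖ ≤ K) : cutoffBCF E K x = 0 := by
  have h1 : max 0 (‖x‖ - K) = 0 := max_eq_left (by linarith)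
  show min 1 (max 0 (‖x‖ - K)) = 0
  rw [h1]
  exact min_eq_right zero_le_one

/-- Tightness consequence: if `c n • (Xₙ - v)` converges in distribution and `c n → ∞`,
then `Xₙ → v` in probability. -/
lemma tendsto_measure_dist_ge {Ω : Type*} [MeasurableSpace Ω] (μ : Measure Ω)
    [IsProbabilityMeasure μ] (X : ℕ → Ω → ι → ℝ) (hX : ∀ n, Measurable (X n))
    (v : ι → ℝ) (c : ℕ → ℝ) (hc : Tendsto c atTop atTop)
    (ν : Measure (ι → ℝ)) [IsProbabilityMeasure ν]
    (hconv : TendstoInDistribution μ (fun n ω => c n • (X n ω - v)) ν)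
    {η : ℝ} (hη : 0 < η) :
    Tendsto (fun n => μ {ω | η ≤ dist (X n ω) v}) atTop (𝓝 0) := by
  have hne : ∀ n, μ {ω | η ≤ dist (X n ω) v} ≠ ⊤ := fun n => measure_ne_top μ _
  rw [← ENNReal.tendsto_toReal_iff hne ENNReal.zero_ne_top]
  simp only [ENNReal.toReal_zero]
  rw [Metric.tendsto_nhds]
  intro δ hδ
  -- tail bound for ν
  have hCmeas : ∀ K : ℕ, MeasurableSet {x : ι → ℝ | (K:ℝ) ≤ ‖x‖} := fun K =>
    (isClosed_le continuous_const continuous_norm).measurableSet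
  have htail : Tendsto (fun K : ℕ => ν {x : ι → ℝ | (K:ℝ) ≤ ‖x‖}) atTop (𝓝 0) := by
    have h := tendsto_measure_iInter_atTop (μ := ν)
      (fun K => (hCmeas K).nullMeasurableSet)
      (fun K K' hKK' x hx => by
        simp only [Set.mem_setOf_eq] at hx ⊢
        exact le_trans (by exact_mod_cast hKK') hx)
      ⟨0, measure_ne_top ν _⟩
    have hempty : (⋂ K : ℕ, {x : ι → ℝ | (K:ℝ) ≤ ‖x‖}) = ∅ := by
      ext x
      simp only [Set.mem_iInter, Set.mem_setOf_eq, Set.mem_empty_iff_false, iff_false, not_forall]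
      obtain ⟨K, hK⟩ := exists_nat_gt ‖x‖
      exact ⟨K, not_le.mpr hK⟩
    simpa [hempty, Function.comp_def] using h
  have htailR : Tendsto (fun K : ℕ => (ν {x : ι → ℝ | (K:ℝ) ≤ ‖x‖}).toReal) atTop (𝓝 0) := by
    have := (ENNReal.tendsto_toReal ENNReal.zero_ne_top).comp htail
    simpa [Function.comp_def] using this
  have hIle : ∀ K : ℕ, ∫ x, cutoffBCF (ι → ℝ) (K:ℝ) x ∂ν ≤
      (ν {x : ι → ℝ | (K:ℝ) ≤ ‖x‖}).toReal := by
    intro K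
    rw [← measureReal_def, ← integral_indicator_one (hCmeas K)]
    refine integral_mono ((cutoffBCF (ι → ℝ) (K:ℝ)).integrable ν)
      ((integrable_const (1:ℝ)).indicator (hCmeas K)) fun x => ?_
    by_cases hx : x ∈ {x : ι → ℝ | (K:ℝ) ≤ ‖x‖}
    · simpa [Set.indicator_of_mem hx] using cutoffBCF_le_one (K:ℝ) x
    · have hxle : ‖x‖ ≤ (K:ℝ) := le_of_not_ge hx
      simp [Set.indicator_of_notMem hx, cutoffBCF_eq_zero hxle, le_refl]
  have hInt0 : Tendsto (fun K : ℕ => ∫ x, cutoffBCF (ι → ℝ) (K:ℝ) x ∂ν) atTop (𝓝 0) :=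
    squeeze_zero (fun K => integral_nonneg fun x => cutoffBCF_nonneg _ _) hIle htailR
  obtain ⟨K, hK⟩ := (hInt0.eventually_lt_const (half_pos hδ)).exists
  have hCLT := hconv (cutoffBCF (ι → ℝ) (K:ℝ))
  have hev1 : ∀ᶠ n in atTop,
      ∫ ω, cutoffBCF (ι → ℝ) (K:ℝ) (c n • (X n ω - v)) ∂μ < δ := by
    refine hCLT.eventually_lt_const ?_
    linarith
  have hev2 : ∀ᶠ n in atTop, ((K:ℝ)+1)/η ≤ c n := hc.eventually_ge_atTop _
  filter_upwards [hev1, hev2] with n h1 h2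
  have hKpos : (0:ℝ) < ((K:ℝ)+1)/η := by positivity
  have hcpos : 0 < c n := lt_of_lt_of_le hKpos h2
  have hY : Measurable fun ω => c n • (X n ω - v) :=
    ((hX n).sub measurable_const).const_smul (c n)
  have hBsub : {ω | η ≤ dist (X n ω) v} ⊆ {ω | (K:ℝ)+1 ≤ ‖c n • (X n ω - v)‖} := by
    intro ω hω
    have hd : η ≤ ‖X n ω - v‖ := by rwa [← dist_eq_norm]
    have hnorm : ‖c n • (X n ω - v)‖ = c n * ‖X n ω - v‖ := by
      rw [norm_smul, Real.norm_eq_abs, abs_of_pos hcpos]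
    rw [Set.mem_setOf_eq, hnorm]
    calc (K:ℝ)+1 = ((K:ℝ)+1)/η * η := by field_simp
      _ ≤ c n * ‖X n ω - v‖ := mul_le_mul h2 hd hη.le hcpos.le
  have hBmeas : MeasurableSet {ω | (K:ℝ)+1 ≤ ‖c n • (X n ω - v)‖} :=
    measurableSet_le measurable_const (continuous_norm.measurable.comp hY)
  have hμle : (μ {ω | η ≤ dist (X n ω) v}).toReal ≤
      ∫ ω, cutoffBCF (ι → ℝ) (K:ℝ) (c n • (X n ω - v)) ∂μ := by
    refine le_trans (ENNReal.toReal_mono (measure_ne_top μ _) (measure_mono hBsub)) ?_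
    rw [← measureReal_def, ← integral_indicator_one hBmeas]
    refine integral_mono ((integrable_const (1:ℝ)).indicator hBmeas) ?_ fun ω => ?_
    · refine Integrable.mono' (integrable_const (1:ℝ))
        (((cutoffBCF (ι → ℝ) (K:ℝ)).continuous.measurable.comp hY).aestronglyMeasurable)
        (ae_of_all _ fun ω => ?_)
      rw [Real.norm_eq_abs, abs_of_nonneg (cutoffBCF_nonneg _ _)]
      exact cutoffBCF_le_one _ _
    · by_cases hω : ω ∈ {ω | (K:ℝ)+1 ≤ ‖c n • (X n ω - v)‖}
      · simpa [Set.indicator_of_mem hω] using (cutoffBCF_eq_one hω).ge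
      · simpa [Set.indicator_of_notMem hω] using cutoffBCF_nonneg (K:ℝ) _
  rw [Real.dist_eq, sub_zero, abs_of_nonneg ENNReal.toReal_nonneg]
  exact lt_of_le_of_lt hμle h1

end AuxProb

/-- Proposition 3.6: under the alternative, the statistic `Γ₂^#(ε)`
diverges to `+∞` in probability, so the p-value of any chi-squared reference variable
tends to `0`. -/
theorem llr_statistic_diverges_under_alternative {d : ℕ} (hd : 1 ≤ d)
    (M₁ M₂ : Matrix (Fin d) (Fin d) ℝ)
    (hM₁ : HasDistinctNonzeroRealEigenvalues M₁)
    (hM₂ : HasDistinctNonzeroRealEigenvalues M₂)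
    {Ω : Type*} [MeasurableSpace Ω] (μ : Measure Ω) [IsProbabilityMeasure μ]
    (A₁ A₂ : ℕ → Ω → Matrix (Fin d) (Fin d) ℝ)
    (hmeas₁ : ∀ n, Measurable fun ω => vecM (A₁ n ω))
    (hmeas₂ : ∀ n, Measurable fun ω => vecM (A₂ n ω))
    (hindep : ∀ n, IndepFun (fun ω => vecM (A₁ n ω)) (fun ω => vecM (A₂ n ω)) μ)
    (c : ℕ → ℝ) (hc : Tendsto c atTop atTop)
    (S₁ S₂ : Matrix (Fin d × Fin d) (Fin d × Fin d) ℝ)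
    (hS₁ : S₁.PosSemidef) (hS₂ : S₂.PosSemidef)
    (hCLT₁ : TendstoInDistribution μ
      (fun n ω => c n • (vecM (A₁ n ω) - vecM M₁)) (gaussianOf S₁))
    (hCLT₂ : TendstoInDistribution μ
      (fun n ω => c n • (vecM (A₂ n ω) - vecM M₂)) (gaussianOf S₂))
    (ε : ℝ) (hε : 0 < ε)
    (hεeig₁ : ¬ IsEigenvalue S₁ ε) (hεeig₂ : ¬ IsEigenvalue S₂ ε)
    (P₁ P₂ : Matrix (Fin d × Fin d) (Fin d) ℝ)
    (hP₁ : ∀ q j, P₁ q j = vecM (M₁ ^ ((j : ℕ) + 1)) q / frobNorm (M₁ ^ ((j : ℕ) + 1)))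
    (hP₂ : ∀ q j, P₂ q j = vecM (M₂ ^ ((j : ℕ) + 1)) q / frobNorm (M₂ ^ ((j : ℕ) + 1)))
    (m₁ m₂ : Fin d × Fin d → ℝ)
    (hm₁ : m₁ = vecM M₁ -
      (P₂ * pinv (P₂ᵀ * truncPinv S₁ ε * P₂) * P₂ᵀ * truncPinv S₁ ε) *ᵥ vecM M₁)
    (hm₂ : m₂ = vecM M₂ -
      (P₁ * pinv (P₁ᵀ * truncPinv S₂ ε * P₁) * P₁ᵀ * truncPinv S₂ ε) *ᵥ vecM M₂)
    (hm₁ne : truncPinv S₁ ε *ᵥ m₁ ≠ 0) (hm₂ne : truncPinv S₂ ε *ᵥ m₂ ≠ 0)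
    (Q₁₂ Q₂₁ : Matrix (Fin d × Fin d) (Fin d × Fin d) ℝ)
    (hQ₁₂ : Q₁₂ = truncPinv S₁ ε -
      truncPinv S₁ ε * P₂ * pinv (P₂ᵀ * truncPinv S₁ ε * P₂) * P₂ᵀ * truncPinv S₁ ε)
    (hQ₂₁ : Q₂₁ = truncPinv S₂ ε -
      truncPinv S₂ ε * P₁ * pinv (P₁ᵀ * truncPinv S₂ ε * P₁) * P₁ᵀ * truncPinv S₂ ε)
    (Γ : ℕ → Ω → ℝ)
    (hΓ : ∀ n ω, Γ n ω = (c n) ^ 2 *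
      ((vecM (A₁ n ω) ⬝ᵥ Q₁₂ *ᵥ vecM (A₁ n ω)) +
        (vecM (A₂ n ω) ⬝ᵥ Q₂₁ *ᵥ vecM (A₂ n ω)))) :
    (∀ K : ℝ, Tendsto (fun n => μ {ω | Γ n ω ≤ K}) atTop (𝓝 0)) ∧
    ∀ (r : ℕ) (ξ : Ω → ℝ), Measurable ξ → Measure.map ξ μ = chiSqMeasure r →
      Tendsto (fun n => μ {ω | Γ n ω < ξ ω}) atTop (𝓝 0) := by
  classical
  have hT₁t := truncPinv_transpose S₁ ε
  have hT₂t := truncPinv_transpose S₂ ε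
  have hT₁psd := truncPinv_posSemidef S₁ hε.le
  have hT₂psd := truncPinv_posSemidef S₂ hε.le
  have ha₁ : 0 < vecM M₁ ⬝ᵥ Q₁₂ *ᵥ vecM M₁ := by
    have hq := quadform_residual (truncPinv S₁ ε) hT₁t P₂ (vecM M₁)
    rw [hQ₁₂, show truncPinv S₁ ε -
        truncPinv S₁ ε * P₂ * pinv (P₂ᵀ * truncPinv S₁ ε * P₂) * P₂ᵀ * truncPinv S₁ ε =
        truncPinv S₁ ε - truncPinv S₁ ε *
          (P₂ * pinv (P₂ᵀ * truncPinv S₁ ε * P₂) * P₂ᵀ * truncPinv S₁ ε) by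
      simp only [Matrix.mul_assoc], ← hq, ← hm₁]
    exact posSemidef_dotProduct_pos hT₁psd hm₁ne
  have ha₂ : 0 < vecM M₂ ⬝ᵥ Q₂₁ *ᵥ vecM M₂ := by
    have hq := quadform_residual (truncPinv S₂ ε) hT₂t P₁ (vecM M₂)
    rw [hQ₂₁, show truncPinv S₂ ε -
        truncPinv S₂ ε * P₁ * pinv (P₁ᵀ * truncPinv S₂ ε * P₁) * P₁ᵀ * truncPinv S₂ ε =
        truncPinv S₂ ε - truncPinv S₂ ε *
          (P₁ * pinv (P₁ᵀ * truncPinv S₂ ε * P₁) * P₁ᵀ * truncPinv S₂ ε) by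
      simp only [Matrix.mul_assoc], ← hq, ← hm₂]
    exact posSemidef_dotProduct_pos hT₂psd hm₂ne
  have main : ∀ K : ℝ, Tendsto (fun n => μ {ω | Γ n ω ≤ K}) atTop (𝓝 0) := by
    intro K
    set a : ℝ := (vecM M₁ ⬝ᵥ Q₁₂ *ᵥ vecM M₁) + (vecM M₂ ⬝ᵥ Q₂₁ *ᵥ vecM M₂) with hadef
    have ha : 0 < a := add_pos ha₁ ha₂
    obtain ⟨η₁, hη₁, hball₁⟩ := Metric.continuousAt_iff.mp
      ((continuous_quadform Q₁₂).continuousAt (x := vecM M₁)) (a/4) (by positivity)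
    obtain ⟨η₂, hη₂, hball₂⟩ := Metric.continuousAt_iff.mp
      ((continuous_quadform Q₂₁).continuousAt (x := vecM M₂)) (a/4) (by positivity)
    have hη : 0 < min η₁ η₂ := lt_min hη₁ hη₂
    haveI := isProbabilityMeasure_gaussianOf S₁
    haveI := isProbabilityMeasure_gaussianOf S₂
    have h1 := tendsto_measure_dist_ge μ (fun n ω => vecM (A₁ n ω)) hmeas₁ (vecM M₁) c hc
      (gaussianOf S₁) hCLT₁ hη
    have h2 := tendsto_measure_dist_ge μ (fun n ω => vecM (A₂ n ω)) hmeas₂ (vecM M₂) c hc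
      (gaussianOf S₂) hCLT₂ hη
    have hsum : Tendsto (fun n => μ {ω | min η₁ η₂ ≤ dist (vecM (A₁ n ω)) (vecM M₁)} +
        μ {ω | min η₁ η₂ ≤ dist (vecM (A₂ n ω)) (vecM M₂)}) atTop (𝓝 0) := by
      simpa using h1.add h2
    refine tendsto_of_tendsto_of_tendsto_of_le_of_le' tendsto_const_nhds hsum
      (Eventually.of_forall fun n => zero_le) ?_
    have hR : ∀ᶠ n in atTop, max 1 (2*(|K|+1)/a) ≤ c n := hc.eventually_ge_atTop _
    filter_upwards [hR] with n hn
    refine le_trans (measure_mono ?_) (measure_union_le _ _)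
    intro ω hω
    by_contra hnot
    simp only [Set.mem_union, Set.mem_setOf_eq, not_or, not_le] at hnot
    obtain ⟨hd1, hd2⟩ := hnot
    have hb1 := hball₁ (lt_of_lt_of_le hd1 (min_le_left _ _))
    have hb2 := hball₂ (lt_of_lt_of_le hd2 (min_le_right _ _))
    rw [Real.dist_eq] at hb1 hb2
    have habs1 := (abs_lt.mp hb1).1
    have habs2 := (abs_lt.mp hb2).1
    have hq : a/2 ≤ (vecM (A₁ n ω) ⬝ᵥ Q₁₂ *ᵥ vecM (A₁ n ω)) +
        (vecM (A₂ n ω) ⬝ᵥ Q₂₁ *ᵥ vecM (A₂ n ω)) := by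
      linarith
    have hc1 : (1:ℝ) ≤ c n := le_trans (le_max_left _ _) hn
    have hc2 : 2*(|K|+1)/a ≤ c n := le_trans (le_max_right _ _) hn
    have eA : 2*(|K|+1)/a * (a/2) = |K|+1 := by field_simp
    have eB : 2*(|K|+1)/a ≤ c n * c n := by nlinarith
    have eC : |K|+1 ≤ (c n * c n) * (a/2) := by
      rw [← eA]; exact mul_le_mul_of_nonneg_right eB (by positivity)
    have eD : (c n * c n) * (a/2) ≤ (c n * c n) *
        ((vecM (A₁ n ω) ⬝ᵥ Q₁₂ *ᵥ vecM (A₁ n ω)) +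
          (vecM (A₂ n ω) ⬝ᵥ Q₂₁ *ᵥ vecM (A₂ n ω))) :=
      mul_le_mul_of_nonneg_left hq (by nlinarith)
    have hKlt : K < Γ n ω := by
      rw [hΓ n ω, pow_two]
      have := le_abs_self K
      linarith
    exact (not_le.mpr hKlt) hω
  refine ⟨main, ?_⟩
  intro r ξ hξmeas hmap
  haveI := isProbabilityMeasure_chiSq r
  rw [ENNReal.tendsto_atTop_zero]
  intro δ hδ
  have hε'pos : (0:ENNReal) < min δ 1 := lt_min hδ (by norm_num)
  have hhalf : (0:ENNReal) < min δ 1 / 2 := ENNReal.half_pos (ne_of_gt hε'pos)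
  have htail : Tendsto (fun K : ℕ => chiSqMeasure r (Set.Ioi (K:ℝ))) atTop (𝓝 0) := by
    have h := tendsto_measure_iInter_atTop (μ := chiSqMeasure r)
      (fun K => measurableSet_Ioi.nullMeasurableSet)
      (fun K K' hKK' => Set.Ioi_subset_Ioi (show ((K:ℕ):ℝ) ≤ ((K':ℕ):ℝ) by exact_mod_cast hKK'))
      ⟨0, measure_ne_top _ _⟩
    have hempty : (⋂ K : ℕ, Set.Ioi ((K:ℝ))) = ∅ := by
      ext x
      simp only [Set.mem_iInter, Set.mem_Ioi, Set.mem_empty_iff_false, iff_false, not_forall]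
      obtain ⟨K, hK⟩ := exists_nat_gt x
      exact ⟨K, not_lt.mpr hK.le⟩
    simpa [hempty, Function.comp_def] using h
  obtain ⟨N₀, hN₀⟩ := ENNReal.tendsto_atTop_zero.mp htail (min δ 1 / 2) hhalf
  obtain ⟨N₁, hN₁⟩ := ENNReal.tendsto_atTop_zero.mp (main (N₀:ℝ)) (min δ 1 / 2) hhalf
  refine ⟨N₁, fun n hn => ?_⟩
  have hsub : {ω | Γ n ω < ξ ω} ⊆ {ω | Γ n ω ≤ (N₀:ℝ)} ∪ {ω | (N₀:ℝ) < ξ ω} := by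
    intro ω hω
    rcases le_or_gt (Γ n ω) (N₀:ℝ) with h | h
    · exact Or.inl h
    · exact Or.inr (lt_trans h hω)
  have hmapK : μ {ω | (N₀:ℝ) < ξ ω} = chiSqMeasure r (Set.Ioi (N₀:ℝ)) := by
    rw [← hmap, Measure.map_apply hξmeas measurableSet_Ioi]
    rfl
  calc μ {ω | Γ n ω < ξ ω} ≤ μ ({ω | Γ n ω ≤ (N₀:ℝ)} ∪ {ω | (N₀:ℝ) < ξ ω}) :=
        measure_mono hsub
    _ ≤ μ {ω | Γ n ω ≤ (N₀:ℝ)} + μ {ω | (N₀:ℝ) < ξ ω} := measure_union_le _ _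
    _ ≤ min δ 1 / 2 + min δ 1 / 2 :=
        add_le_add (hN₁ n hn) (by rw [hmapK]; exact hN₀ N₀ le_rfl)
    _ = min δ 1 := ENNReal.add_halves _
    _ ≤ δ := min_le_left _ _

end
end

section
/- Let M₁, M₂ ∈ ℝ^{d×d} each have d distinct nonzero real eigenvalues, and suppose they share a common eigenvector matrix: there is an invertible V ∈ ℝ^{d×d} such that V⁻¹M₁V and V⁻¹M₂V are both diagonal. Then every matrix power M_i^j (j = 1,…,d; i = 1,2) is nonzero, and, with P_i ∈ ℝ^{d²×d} defined to have j-th column vec(M_i^j)/‖M_i^j‖_F, there exist vectors x₁, x₂ ∈ ℝ^d such that vec(M₁) = P₂ x₁ and vec(M₂) = P₁ x₂. -/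
open MeasureTheory ProbabilityTheory Filter Matrix
open scoped Topology Kronecker Classical

noncomputable section

open Polynomial in
lemma my_charpoly_diag {d : ℕ} (v : Fin d → ℝ) :
    (Matrix.diagonal v).charpoly = ∏ i, (X - C (v i)) := by
  have h : charmatrix (Matrix.diagonal v) = Matrix.diagonal (fun i => X - C (v i)) := by
    ext i j
    by_cases hij : i = j
    · subst hij; simp [charmatrix_apply_eq]
    · simp [charmatrix_apply_ne _ _ _ hij, Matrix.diagonal_apply_ne _ hij]
  rw [Matrix.charpoly, h, Matrix.det_diagonal]

open Polynomial in
lemma my_charpoly_conj {d : ℕ} (V M : Matrix (Fin d) (Fin d) ℝ) (hV : IsUnit V.det) :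
    (V⁻¹ * M * V).charpoly = M.charpoly := by
  have h1 : V⁻¹ * V = 1 := Matrix.nonsing_inv_mul V hV
  have hmm : ((V⁻¹).map (C : ℝ →+* ℝ[X]) : Matrix (Fin d) (Fin d) ℝ[X]) * V.map C = 1 := by
    rw [← Matrix.map_mul, h1]
    exact Matrix.map_one _ (map_zero C) (map_one C)
  have key : charmatrix (V⁻¹ * M * V) =
      (V⁻¹).map C * charmatrix M * V.map C := by
    simp only [charmatrix, Matrix.mul_sub, Matrix.sub_mul]
    congr 1
    · have hc : ((V⁻¹).map (C : ℝ →+* ℝ[X]) : Matrix (Fin d) (Fin d) ℝ[X])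
          * Matrix.scalar (Fin d) X = Matrix.scalar (Fin d) X * (V⁻¹).map C :=
        (Matrix.scalar_commute X (fun r => Commute.all X r) _).symm
      rw [hc, Matrix.mul_assoc, hmm, Matrix.mul_one]
    · simp only [RingHom.mapMatrix_apply, Matrix.map_mul, Matrix.mul_assoc]
  rw [Matrix.charpoly, key, Matrix.det_mul, Matrix.det_mul, Matrix.charpoly]
  have hdet : ((V⁻¹).map (C : ℝ →+* ℝ[X])).det * (V.map C).det = 1 := by
    rw [← Matrix.det_mul, hmm, Matrix.det_one]
  calc ((V⁻¹).map (C : ℝ →+* ℝ[X])).det * (charmatrix M).det * (V.map C).det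
      = ((V⁻¹).map (C : ℝ →+* ℝ[X])).det * (V.map C).det * (charmatrix M).det := by ring
    _ = (charmatrix M).det := by rw [hdet, one_mul]

lemma my_conj_pow {d : ℕ} (V M : Matrix (Fin d) (Fin d) ℝ) (hV : IsUnit V.det) (k : ℕ) :
    (V⁻¹ * M * V) ^ k = V⁻¹ * M ^ k * V := by
  have h2 : V * V⁻¹ = 1 := Matrix.mul_nonsing_inv V hV
  induction k with
  | zero => simp [Matrix.nonsing_inv_mul V hV]
  | succ n ih =>
      rw [pow_succ, pow_succ, ih]
      calc V⁻¹ * M ^ n * V * (V⁻¹ * M * V) = V⁻¹ * M ^ n * (V * V⁻¹) * M * V := by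
            simp only [Matrix.mul_assoc]
        _ = V⁻¹ * (M ^ n * M) * V := by rw [h2]; simp only [Matrix.mul_assoc, Matrix.mul_one]

open Polynomial in
lemma my_key {d : ℕ} (M N V : Matrix (Fin d) (Fin d) ℝ)
    (hM : HasDistinctNonzeroRealEigenvalues M) (hV : IsUnit V.det)
    (hdM : (V⁻¹ * M * V).IsDiag) (hdN : (V⁻¹ * N * V).IsDiag) :
    ∃ c : Fin d → ℝ, N = ∑ j : Fin d, c j • M ^ ((j : ℕ) + 1) := by
  obtain ⟨lam, hinj, hne, hcp⟩ := hM
  set μ : Fin d → ℝ := (V⁻¹ * M * V).diag with hμ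
  have hD : V⁻¹ * M * V = Matrix.diagonal μ := hdM.diagonal_diag.symm
  have hcd : (∏ i, (X - C (μ i))) = ∏ i, (X - C (lam i)) := by
    rw [← my_charpoly_diag, ← hD, my_charpoly_conj _ _ hV, hcp]
  have hroots : ∀ (f : Fin d → ℝ),
      (∏ i, (X - C (f i))).roots = Multiset.map f Finset.univ.val := by
    intro f
    rw [Finset.prod_eq_multiset_prod,
      show (fun i => X - C (f i)) = (fun a => X - C a) ∘ f from rfl,
      ← Multiset.map_map, roots_multiset_prod_X_sub_C]
  have hms : Multiset.map μ Finset.univ.val = Multiset.map lam Finset.univ.val := by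
    rw [← hroots, ← hroots, hcd]
  have hμne : ∀ i, μ i ≠ 0 := by
    intro i
    have hmem : μ i ∈ Multiset.map lam Finset.univ.val := by
      rw [← hms]
      exact Multiset.mem_map_of_mem μ (Finset.mem_univ_val i)
    obtain ⟨k, _, hk⟩ := Multiset.mem_map.mp hmem
    exact hk ▸ hne k
  have hμinj : Function.Injective μ := by
    have hnd : (Multiset.map μ Finset.univ.val).Nodup := by
      rw [hms]; exact Multiset.Nodup.map hinj Finset.univ.nodup
    intro a b hab
    exact Multiset.inj_on_of_nodup_map hnd a (Finset.mem_univ_val a)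
      b (Finset.mem_univ_val b) hab
  -- Vandermonde system
  set A : Matrix (Fin d) (Fin d) ℝ := Matrix.of fun i j : Fin d => μ i ^ ((j : ℕ) + 1) with hAdef
  have hA : A = Matrix.diagonal μ * Matrix.vandermonde μ := by
    ext i j
    rw [Matrix.diagonal_mul]
    simp [hAdef, Matrix.vandermonde, pow_succ']
  have hdetA : IsUnit A.det := by
    rw [hA, Matrix.det_mul, Matrix.det_diagonal, isUnit_iff_ne_zero]
    exact mul_ne_zero (Finset.prod_ne_zero_iff.mpr fun i _ => hμne i)
      (Matrix.det_vandermonde_ne_zero_iff.mpr hμinj)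
  set ν : Fin d → ℝ := (V⁻¹ * N * V).diag with hν
  have hE : V⁻¹ * N * V = Matrix.diagonal ν := hdN.diagonal_diag.symm
  set c : Fin d → ℝ := A⁻¹ *ᵥ ν with hc
  have hAc : A *ᵥ c = ν := by
    rw [hc, Matrix.mulVec_mulVec, Matrix.mul_nonsing_inv _ hdetA, Matrix.one_mulVec]
  have hentry : ∀ i, ν i = ∑ j, c j * μ i ^ ((j : ℕ) + 1) := by
    intro i
    rw [← hAc]
    simp [Matrix.mulVec, dotProduct, hAdef, mul_comm]
  have hsum : Matrix.diagonal ν = ∑ j : Fin d, c j • (Matrix.diagonal μ) ^ ((j : ℕ) + 1) := by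
    ext i k
    rw [Matrix.sum_apply]
    by_cases hik : i = k
    · subst hik
      simp only [Matrix.diagonal_apply_eq, Matrix.smul_apply, Matrix.diagonal_pow,
        smul_eq_mul]
      rw [hentry i]
      exact Finset.sum_congr rfl fun j _ => by rw [Pi.pow_apply]
    · simp only [Matrix.diagonal_apply_ne _ hik, Matrix.smul_apply, Matrix.diagonal_pow,
        Matrix.diagonal_apply_ne _ hik, smul_eq_mul, mul_zero]
      simp
  refine ⟨c, ?_⟩
  have h1 : V⁻¹ * V = 1 := Matrix.nonsing_inv_mul V hV
  have h2 : V * V⁻¹ = 1 := Matrix.mul_nonsing_inv V hV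
  have hNrec : N = V * (V⁻¹ * N * V) * V⁻¹ := by
    calc N = (V * V⁻¹) * N * (V * V⁻¹) := by rw [h2]; simp
      _ = V * (V⁻¹ * N * V) * V⁻¹ := by simp only [Matrix.mul_assoc]
  rw [hNrec, hE, hsum, Finset.mul_sum, Finset.sum_mul]
  refine Finset.sum_congr rfl fun j _ => ?_
  rw [← hD, my_conj_pow _ _ hV]
  rw [Matrix.mul_smul, Matrix.smul_mul]
  congr 1
  calc V * (V⁻¹ * M ^ ((j : ℕ) + 1) * V) * V⁻¹
      = (V * V⁻¹) * M ^ ((j : ℕ) + 1) * (V * V⁻¹) := by simp only [Matrix.mul_assoc]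
    _ = M ^ ((j : ℕ) + 1) := by rw [h2]; simp


lemma my_frobNorm_pos {m n : Type*} [Fintype m] [Fintype n] {A : Matrix m n ℝ}
    (h : A ≠ 0) : 0 < frobNorm A := by
  obtain ⟨i, j, hij⟩ : ∃ i j, A i j ≠ 0 := by
    by_contra hc
    push_neg at hc
    exact h (Matrix.ext fun i j => hc i j)
  rw [frobNorm, Real.sqrt_pos]
  have h1 : (0:ℝ) < ∑ k, (A i k) ^ 2 :=
    Finset.sum_pos' (fun k _ => sq_nonneg _) ⟨j, Finset.mem_univ j, by positivity⟩
  exact Finset.sum_pos' (fun k _ => Finset.sum_nonneg fun l _ => sq_nonneg _)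
    ⟨i, Finset.mem_univ i, h1⟩

lemma my_det_ne_zero {d : ℕ} {M : Matrix (Fin d) (Fin d) ℝ}
    (hM : HasDistinctNonzeroRealEigenvalues M) : M.det ≠ 0 := by
  obtain ⟨lam, _, hne, hcp⟩ := hM
  rw [Matrix.det_eq_sign_charpoly_coeff, hcp, Polynomial.coeff_zero_eq_eval_zero,
    Polynomial.eval_prod]
  simp only [Polynomial.eval_sub, Polynomial.eval_X, Polynomial.eval_C, zero_sub]
  exact mul_ne_zero (pow_ne_zero _ (by norm_num))
    (Finset.prod_ne_zero_iff.mpr fun i _ => neg_ne_zero.mpr (hne i))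

lemma my_pow_ne_zero {d : ℕ} (hd : 1 ≤ d) {M : Matrix (Fin d) (Fin d) ℝ}
    (hM : HasDistinctNonzeroRealEigenvalues M) (k : ℕ) : M ^ (k + 1) ≠ 0 := by
  intro h0
  have : Nonempty (Fin d) := ⟨⟨0, hd⟩⟩
  have hdet : (M ^ (k + 1)).det = 0 := by rw [h0, Matrix.det_zero]
  rw [Matrix.det_pow] at hdet
  exact pow_ne_zero _ (my_det_ne_zero hM) hdet

lemma my_vec_combo {d : ℕ} (hd : 1 ≤ d) (M N : Matrix (Fin d) (Fin d) ℝ)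
    (hM : HasDistinctNonzeroRealEigenvalues M)
    (V : Matrix (Fin d) (Fin d) ℝ) (hV : IsUnit V.det)
    (hdM : (V⁻¹ * M * V).IsDiag) (hdN : (V⁻¹ * N * V).IsDiag)
    (P : Matrix (Fin d × Fin d) (Fin d) ℝ)
    (hP : ∀ q j, P q j = vecM (M ^ ((j : ℕ) + 1)) q / frobNorm (M ^ ((j : ℕ) + 1))) :
    ∃ x : Fin d → ℝ, vecM N = P *ᵥ x := by
  obtain ⟨c, hc⟩ := my_key M N V hM hV hdM hdN
  refine ⟨fun j => frobNorm (M ^ ((j : ℕ) + 1)) * c j, funext fun q => ?_⟩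
  have hfr : ∀ j : Fin d, frobNorm (M ^ ((j : ℕ) + 1)) ≠ 0 := fun j =>
    (my_frobNorm_pos (my_pow_ne_zero hd hM (j : ℕ))).ne'
  rw [Matrix.mulVec]
  rw [dotProduct]
  have : vecM N q = ∑ j : Fin d, c j * vecM (M ^ ((j : ℕ) + 1)) q := by
    rw [vecM, hc, Matrix.sum_apply]
    exact Finset.sum_congr rfl fun j _ => by rw [Matrix.smul_apply, smul_eq_mul]; rfl
  rw [this]
  refine Finset.sum_congr rfl fun j _ => ?_
  rw [hP q j]
  field_simp [hfr j]

/-- Equation (A.2): under `H₀`, `vec M₁` lies in the column space of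
`P₂` and `vec M₂` lies in the column space of `P₁`; also all powers `M_i^j` are nonzero. -/
theorem vec_in_column_space_under_H0 {d : ℕ} (hd : 1 ≤ d)
    (M₁ M₂ : Matrix (Fin d) (Fin d) ℝ)
    (hM₁ : HasDistinctNonzeroRealEigenvalues M₁)
    (hM₂ : HasDistinctNonzeroRealEigenvalues M₂)
    (V : Matrix (Fin d) (Fin d) ℝ) (hV : IsUnit V.det)
    (hdiag₁ : (V⁻¹ * M₁ * V).IsDiag) (hdiag₂ : (V⁻¹ * M₂ * V).IsDiag)
    (P₁ P₂ : Matrix (Fin d × Fin d) (Fin d) ℝ)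
    (hP₁ : ∀ q j, P₁ q j = vecM (M₁ ^ ((j : ℕ) + 1)) q / frobNorm (M₁ ^ ((j : ℕ) + 1)))
    (hP₂ : ∀ q j, P₂ q j = vecM (M₂ ^ ((j : ℕ) + 1)) q / frobNorm (M₂ ^ ((j : ℕ) + 1))) :
    (∀ j : Fin d, M₁ ^ ((j : ℕ) + 1) ≠ 0) ∧
    (∀ j : Fin d, M₂ ^ ((j : ℕ) + 1) ≠ 0) ∧
    (∃ x₁ : Fin d → ℝ, vecM M₁ = P₂ *ᵥ x₁) ∧
    (∃ x₂ : Fin d → ℝ, vecM M₂ = P₁ *ᵥ x₂) := by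
  refine ⟨fun j => my_pow_ne_zero hd hM₁ (j : ℕ), fun j => my_pow_ne_zero hd hM₂ (j : ℕ),
    my_vec_combo hd M₂ M₁ hM₂ V hV hdiag₂ hdiag₁ P₂ hP₂,
    my_vec_combo hd M₁ M₂ hM₁ V hV hdiag₁ hdiag₂ P₁ hP₁⟩

end
end
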